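/- Let (c_k)_{k≥1} be any real sequence and let d denote the derivative operator on ℝ[X]. Define the ℝ-linear operators H and A on ℝ[X] by H(p) = Σ_{k≥1} (c_k/k!)·d^k(p) and A(p) = Σ_{m≥1} (c_m/(m+1)!)·d^{m+1}(p) (both sums have only finitely many nonzero terms for each polynomial p). Then A(1) = 0 and A∘F − F∘A = H. -/

import Mathlib

open Polynomial Finset

/-- The operator of multiplication by `X` on `ℝ[X]`. -/
noncomputable def F : Module.End ℝ (Polynomial ℝ) := LinearMap.mulLeft ℝ (X : Polynomial ℝ)

/-- The derivative operator on `ℝ[X]`, as a module endomorphism. -/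
noncomputable def d : Module.End ℝ (Polynomial ℝ) := Polynomial.derivative

lemma dXmul (k : ℕ) (p : Polynomial ℝ) :
    (d ^ (k+1)) (X * p) = X * ((d ^ (k+1)) p) + ((k:ℝ)+1) • ((d ^ k) p) := by
  induction k with
  | zero =>
    simp [d, pow_one, derivative_mul]
    ring
  | succ k ih =>
    have h1 : (d ^ (k+2)) (X * p) = d ((d ^ (k+1)) (X * p)) := by
      rw [pow_succ']; rfl
    rw [h1, ih]
    have : d (X * (d ^ (k+1)) p + ((k:ℝ)+1) • (d ^ k) p)
        = (d ^ (k+1)) p + X * d ((d ^ (k+1)) p) + ((k:ℝ)+1) • d ((d ^ k) p) := by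
      simp [d, derivative_mul]
    rw [this]
    have h2 : (d ^ (k+2)) p = d ((d ^ (k+1)) p) := by rw [pow_succ']; rfl
    have h3 : (d ^ (k+1)) p = d ((d ^ k) p) := by rw [pow_succ']; rfl
    rw [h2, h3]
    push_cast
    ring_nf
    module

/-- If `H = Σ_{k≥1} (c_k/k!)·d^k` and `A = Σ_{m≥1} (c_m/(m+1)!)·d^{m+1}` (the sums being
finite on each polynomial), then `A 1 = 0` and `A∘F − F∘A = H`. -/
theorem stmt17 (c : ℕ → ℝ)
    (H A : Module.End ℝ (Polynomial ℝ))
    (hH : ∀ (p : Polynomial ℝ) (n : ℕ), p.natDegree ≤ n →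
      H p = ∑ k ∈ Icc 1 n, (c k / (Nat.factorial k : ℝ)) • (d ^ k) p)
    (hA : ∀ (p : Polynomial ℝ) (n : ℕ), p.natDegree ≤ n →
      A p = ∑ m ∈ Icc 1 n, (c m / (Nat.factorial (m + 1) : ℝ)) • (d ^ (m + 1)) p) :
    A 1 = 0 ∧ A * F - F * A = H := by
  constructor
  · have := hA 1 0 (by simp)
    rw [this]; simp
  · apply LinearMap.ext; intro p
    show A (F p) - F (A p) = H p
    set n := p.natDegree
    have hXp : (X * p).natDegree ≤ n + 1 := by
      calc (X * p).natDegree ≤ X.natDegree + p.natDegree := natDegree_mul_le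
        _ ≤ n + 1 := by simp [natDegree_X]; omega
    have hFp : F p = X * p := rfl
    rw [hFp, hA (X * p) (n+1) hXp, hA p (n+1) (by omega), hH p (n+1) (by omega)]
    have : F (∑ m ∈ Icc 1 (n+1), (c m / (Nat.factorial (m + 1) : ℝ)) • (d ^ (m + 1)) p)
        = ∑ m ∈ Icc 1 (n+1), (c m / (Nat.factorial (m + 1) : ℝ)) • (X * (d ^ (m + 1)) p) := by
      rw [map_sum]
      refine Finset.sum_congr rfl fun m _ => ?_
      rw [LinearMap.map_smul]; rfl
    rw [this, ← Finset.sum_sub_distrib]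
    refine Finset.sum_congr rfl fun m hm => ?_
    obtain ⟨k, rfl⟩ : ∃ k, m = k + 1 := ⟨m - 1, by simp at hm; omega⟩
    rw [dXmul (k+1) p]
    rw [smul_add, add_sub_cancel_left]
    rw [smul_smul]
    congr 1
    have : (Nat.factorial (k+1+1) : ℝ) = ((k:ℝ)+1+1) * Nat.factorial (k+1) := by
      push_cast [Nat.factorial_succ]; ring
    rw [this]
    field_simp
    push_cast
    ring
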